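/- Let [φ] ∈ (ℂ/ℤ)^n have toric degree r with toric vectors θ^(1),…,θ^(r) ∈ ℤ^n. Then θ^(1),…,θ^(r) are ℚ-linearly independent; in particular, the n×r integer matrix Θ whose columns are the θ^(k) has maximal rank r. -/

import Mathlib

open scoped BigOperators
open Complex

noncomputable section

/-- `φ` (a representative of a class in `(ℂ/ℤ)^n`) is represented by toric
coefficients `α` and toric vectors `θ`, i.e. `[φ] = [∑ k, α k • θ k]`. -/
def IsToricRep {n r : ℕ} (φ : Fin n → ℂ) (α : Fin r → ℂ) (θ : Fin r → Fin n → ℤ) : Prop :=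
  ∀ j, ∃ m : ℤ, φ j - ∑ k, α k * (θ k j : ℂ) = (m : ℂ)

/-- `[φ]` has toric degree `r`: `r` is the minimal length of a toric representation. -/
def HasToricDegree {n : ℕ} (φ : Fin n → ℂ) (r : ℕ) : Prop :=
  (∃ (α : Fin r → ℂ) (θ : Fin r → Fin n → ℤ), IsToricRep φ α θ) ∧
  ∀ s : ℕ, (∃ (α : Fin s → ℂ) (θ : Fin s → Fin n → ℤ), IsToricRep φ α θ) → r ≤ s

/-- `α₁, …, α_r` are rationally independent together with `1`. -/
def RatIndepWithOne {r : ℕ} (α : Fin r → ℂ) : Prop :=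
  ∀ (c0 : ℤ) (c : Fin r → ℤ), (c0 : ℂ) + ∑ k, (c k : ℂ) * α k = 0 → c0 = 0 ∧ ∀ k, c k = 0

/-- `α₁, …, α_r` are rationally independent. -/
def RatIndep {r : ℕ} (α : Fin r → ℂ) : Prop :=
  ∀ c : Fin r → ℤ, ∑ k, (c k : ℂ) * α k = 0 → ∀ k, c k = 0

/-- Additive resonances of `θ ∈ ℤ^n` relative to the `j`-th coordinate. -/
def ResPlus {n : ℕ} (θ : Fin n → ℤ) (j : Fin n) : Set (Fin n → ℕ) :=
  {Q | 2 ≤ ∑ h, Q h ∧ ∑ h, (Q h : ℤ) * θ h = θ j}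

/-- Multiplicative resonances of `[φ] ∈ (ℂ/ℤ)^n` relative to the `j`-th coordinate. -/
def ResMod {n : ℕ} (φ : Fin n → ℂ) (j : Fin n) : Set (Fin n → ℕ) :=
  {Q | 2 ≤ ∑ h, Q h ∧ ∃ m : ℤ, (∑ h, (Q h : ℂ) * φ h) - φ j = (m : ℂ)}

-- key lemma: no nontrivial rational relation among θ
lemma key {n r : ℕ} (φ : Fin n → ℂ) (hdeg : HasToricDegree φ r)
    (α : Fin r → ℂ) (θ : Fin r → Fin n → ℤ) (hrep : IsToricRep φ α θ)
    (c : Fin r → ℚ) (hc : ∀ j, ∑ k, c k * (θ k j : ℚ) = 0) : ∀ k, c k = 0 := by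
  by_contra h
  push_neg at h
  obtain ⟨k0, hk0⟩ := h
  have hrpos := k0.pos
  obtain ⟨m, rfl⟩ : ∃ m, r = m + 1 := ⟨r - 1, by omega⟩
  -- new representation with m vectors
  set β : Fin m → ℂ := fun i =>
    α (k0.succAbove i) - α k0 * ((c (k0.succAbove i) / c k0 : ℚ) : ℂ) with hβ
  have hrep' : IsToricRep φ β (fun i => θ (k0.succAbove i)) := by
    intro j
    obtain ⟨mj, hmj⟩ := hrep j
    refine ⟨mj, ?_⟩
    rw [← hmj]
    have hsum : ∑ k, α k * (θ k j : ℂ) = ∑ i, β i * (θ (k0.succAbove i) j : ℂ) := by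
      rw [Fin.sum_univ_succAbove (fun k => α k * (θ k j : ℂ)) k0]
      have hcc : ∑ k, (c k : ℂ) * (θ k j : ℂ) = 0 := by
        have := hc j
        have : ((∑ k, c k * (θ k j : ℚ) : ℚ) : ℂ) = 0 := by rw [this]; simp
        push_cast at this
        convert this using 2
      rw [Fin.sum_univ_succAbove (fun k => (c k : ℂ) * (θ k j : ℂ)) k0] at hcc
      have hck0 : (c k0 : ℂ) ≠ 0 := by exact_mod_cast hk0
      have hS : ∑ i, (c (k0.succAbove i) : ℂ) * (θ (k0.succAbove i) j : ℂ)
          = -((c k0 : ℂ) * (θ k0 j : ℂ)) := by linear_combination hcc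
      have expand : ∑ i, β i * (θ (k0.succAbove i) j : ℂ)
          = ∑ i, α (k0.succAbove i) * (θ (k0.succAbove i) j : ℂ)
            - (α k0 / (c k0 : ℂ)) * ∑ i, (c (k0.succAbove i) : ℂ) * (θ (k0.succAbove i) j : ℂ) := by
        rw [Finset.mul_sum, ← Finset.sum_sub_distrib]
        refine Finset.sum_congr rfl fun i _ => ?_
        simp only [hβ]
        push_cast
        field_simp
      rw [expand, hS]
      field_simp
      ring
    rw [hsum]
  exact absurd (hdeg.2 m ⟨β, _, hrep'⟩) (by omega)


/-- Toric vectors of a minimal toric representation are `ℚ`-linearly independent; in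
particular the matrix `Θ` with columns `θ^(k)` has maximal rank `r`. -/
theorem stmt5 (n r : ℕ) (φ : Fin n → ℂ) (hdeg : HasToricDegree φ r)
    (α : Fin r → ℂ) (θ : Fin r → Fin n → ℤ) (hrep : IsToricRep φ α θ) :
    LinearIndependent ℚ (fun k : Fin r => fun j : Fin n => (θ k j : ℚ)) ∧
    (Matrix.of fun (j : Fin n) (k : Fin r) => (θ k j : ℚ)).rank = r := by
  have hli : LinearIndependent ℚ (fun k : Fin r => fun j : Fin n => (θ k j : ℚ)) := by
    rw [Fintype.linearIndependent_iff]
    intro g hg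
    refine key φ hdeg α θ hrep g (fun j => ?_)
    have := congrFun hg j
    simpa using this
  refine ⟨hli, ?_⟩
  rw [← Matrix.rank_transpose]
  have h2 : LinearIndependent ℚ
      (Matrix.transpose (Matrix.of fun (j : Fin n) (k : Fin r) => (θ k j : ℚ))) := hli
  exact h2.rank_matrix.trans (Fintype.card_fin r)
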